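/- Consider the discounted LQR with noisy dynamics: s_{t+1} = A s_t + B u_t + z_t, s_0 = 0, u_t = −K s_t, z_t i.i.d. zero-mean with identity covariance, discount factor γ ∈ (0,1), and cost C_dyn(K) = E[Σ_{t≥0} γ^t (s_tᵀ Q s_t + u_tᵀ R u_t)]. Let C_init(K) be the undiscounted-with-γ-substitution random-initialization cost E_{s₀}[Σ_{t≥0} γ^t (s_tᵀ Q s_t + u_tᵀ R u_t)] with s_{t+1} = A s_t + B u_t and E[s₀ s₀ᵀ] = I. If K stabilizes the discounted system, then C_dyn(K) = (γ/(1−γ)) C_init(K). -/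

import Mathlib

open MeasureTheory Matrix

section Aux

lemma lqr_aux_sum_dotProduct {n : Type*} [Fintype n] {ι : Type*} (s : Finset ι)
    (u : ι → n → ℝ) (w : n → ℝ) : (∑ i ∈ s, u i) ⬝ᵥ w = ∑ i ∈ s, u i ⬝ᵥ w := by
  simp only [dotProduct, Finset.sum_apply, Finset.sum_mul]
  exact Finset.sum_comm

lemma lqr_aux_dotProduct_sum {n : Type*} [Fintype n] {ι : Type*} (s : Finset ι)
    (u : ι → n → ℝ) (w : n → ℝ) : w ⬝ᵥ (∑ i ∈ s, u i) = ∑ i ∈ s, w ⬝ᵥ u i := by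
  simp only [dotProduct, Finset.sum_apply, Finset.mul_sum]
  exact Finset.sum_comm

lemma lqr_aux_mulVec_sum {n p : Type*} [Fintype n] {ι : Type*} (s : Finset ι)
    (M : Matrix p n ℝ) (u : ι → n → ℝ) : M *ᵥ (∑ i ∈ s, u i) = ∑ i ∈ s, M *ᵥ u i := by
  funext j
  simp only [Matrix.mulVec, dotProduct, Finset.sum_apply, Finset.mul_sum]
  exact Finset.sum_comm

lemma lqr_aux_conj_dot {n p : Type*} [Fintype n] [Fintype p]
    (N N' : Matrix p n ℝ) (W : Matrix p p ℝ) (u v : n → ℝ) :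
    (N *ᵥ u) ⬝ᵥ W *ᵥ (N' *ᵥ v) = u ⬝ᵥ (Nᵀ * W * N') *ᵥ v := by
  rw [← Matrix.mulVec_mulVec, ← Matrix.mulVec_mulVec, Matrix.dotProduct_mulVec u,
    Matrix.dotProduct_mulVec (N *ᵥ u), ← Matrix.vecMul_transpose N u, Matrix.vecMul_vecMul,
    Matrix.dotProduct_mulVec (u ᵥ* Nᵀ), Matrix.vecMul_vecMul]

lemma lqr_aux_quad_expand {n : Type*} [Fintype n] (G : Matrix n n ℝ) (u v : n → ℝ) :
    u ⬝ᵥ G *ᵥ v = ∑ a, ∑ b, G a b * (u a * v b) := by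
  simp only [dotProduct, Matrix.mulVec, Finset.mul_sum]
  exact Finset.sum_congr rfl fun a _ => Finset.sum_congr rfl fun b _ => by ring

/-- Generic second-moment lemma: if a random vector has zero "cross" second moments
given by a delta, then the expectation of the quadratic form is the trace. -/
lemma lqr_aux_moment {α : Type*} [MeasurableSpace α] (μ : Measure α)
    {n : ℕ} (u v : α → Fin n → ℝ)
    (hint : ∀ a b, Integrable (fun ω => u ω a * v ω b) μ)
    (hcov : ∀ a b, ∫ ω, u ω a * v ω b ∂μ = if a = b then 1 else 0)
    (G : Matrix (Fin n) (Fin n) ℝ) :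
    ∫ ω, (u ω) ⬝ᵥ G *ᵥ (v ω) ∂μ = G.trace := by
  have h1 : (fun ω => (u ω) ⬝ᵥ G *ᵥ (v ω))
      = fun ω => ∑ a, ∑ b, G a b * (u ω a * v ω b) := by
    funext ω; exact lqr_aux_quad_expand G (u ω) (v ω)
  rw [h1]
  erw [integral_finset_sum _ (fun a _ =>
    integrable_finset_sum _ (fun b _ => (hint a b).const_mul _))]
  have h2 : ∀ a : Fin n, ∫ ω, ∑ b, G a b * (u ω a * v ω b) ∂μ = G a a := by
    intro a
    rw [integral_finset_sum _ (fun b _ => (hint a b).const_mul _)]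
    have h3 : ∀ b : Fin n, ∫ ω, G a b * (u ω a * v ω b) ∂μ
        = G a b * (if a = b then (1:ℝ) else 0) := by
      intro b; rw [MeasureTheory.integral_const_mul, hcov]
    simp only [h3, mul_ite, mul_one, mul_zero, Finset.sum_ite_eq, Finset.mem_univ, if_true]
  simp only [h2, Matrix.trace, Matrix.diag]

/-- Zero second-moment lemma (for independent noise at distinct times). -/
lemma lqr_aux_moment_zero {α : Type*} [MeasurableSpace α] (μ : Measure α)
    {n : ℕ} (u v : α → Fin n → ℝ)
    (hint : ∀ a b, Integrable (fun ω => u ω a * v ω b) μ)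
    (hcov : ∀ a b, ∫ ω, u ω a * v ω b ∂μ = 0)
    (G : Matrix (Fin n) (Fin n) ℝ) :
    ∫ ω, (u ω) ⬝ᵥ G *ᵥ (v ω) ∂μ = 0 := by
  have h1 : (fun ω => (u ω) ⬝ᵥ G *ᵥ (v ω))
      = fun ω => ∑ a, ∑ b, G a b * (u ω a * v ω b) := by
    funext ω; exact lqr_aux_quad_expand G (u ω) (v ω)
  rw [h1]
  erw [integral_finset_sum _ (fun a _ =>
    integrable_finset_sum _ (fun b _ => (hint a b).const_mul _))]
  refine Finset.sum_eq_zero fun a _ => ?_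
  rw [integral_finset_sum _ (fun b _ => (hint a b).const_mul _)]
  refine Finset.sum_eq_zero fun b _ => ?_
  rw [MeasureTheory.integral_const_mul, hcov, mul_zero]

/-- Integrability of coordinate products of a.s. bounded random vectors. -/
lemma lqr_aux_int_prod {α : Type*} [MeasurableSpace α] (μ : Measure α) [IsFiniteMeasure μ]
    {n : ℕ} (u v : α → Fin n → ℝ) (hu : Measurable u) (hv : Measurable v)
    (Cn : ℝ)
    (hub : ∀ᵐ ω ∂μ, ∑ i, (u ω i) ^ 2 ≤ Cn) (hvb : ∀ᵐ ω ∂μ, ∑ i, (v ω i) ^ 2 ≤ Cn)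
    (a b : Fin n) : Integrable (fun ω => u ω a * v ω b) μ := by
  have hmeas : Measurable fun ω => u ω a * v ω b :=
    ((measurable_pi_apply a).comp hu).mul ((measurable_pi_apply b).comp hv)
  refine Integrable.mono' (integrable_const Cn) hmeas.aestronglyMeasurable ?_
  filter_upwards [hub, hvb] with ω h1 h2
  have hua : (u ω a) ^ 2 ≤ Cn :=
    le_trans (Finset.single_le_sum (f := fun i => (u ω i) ^ 2)
      (fun i _ => sq_nonneg _) (Finset.mem_univ a)) h1
  have hvb' : (v ω b) ^ 2 ≤ Cn :=
    le_trans (Finset.single_le_sum (f := fun i => (v ω i) ^ 2)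
      (fun i _ => sq_nonneg _) (Finset.mem_univ b)) h2
  have : ‖u ω a * v ω b‖ ≤ ((u ω a) ^ 2 + (v ω b) ^ 2) / 2 := by
    rw [Real.norm_eq_abs, abs_mul]
    nlinarith [sq_nonneg (|u ω a| - |v ω b|), sq_abs (u ω a), sq_abs (v ω b),
      abs_nonneg (u ω a), abs_nonneg (v ω b)]
  linarith

end Aux

set_option maxHeartbeats 800000 in
/-- For the discounted LQR, the population cost under i.i.d. additive noise
(zero mean, identity covariance, started at `s₀ = 0`) equals `γ/(1−γ)` times the
random-initialization population cost (zero-mean, identity-covariance initial state),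
provided `K` stabilizes the discounted system. -/
theorem lqr_noisy_dynamics_cost_eq_scaled_random_init_cost
    {n m : ℕ} {Ω : Type*} [MeasurableSpace Ω] (P : Measure Ω) [IsProbabilityMeasure P]
    (A : Matrix (Fin n) (Fin n) ℝ) (B : Matrix (Fin n) (Fin m) ℝ)
    (Q : Matrix (Fin n) (Fin n) ℝ) (R : Matrix (Fin m) (Fin m) ℝ)
    (hQ : Q.PosDef) (hR : R.PosDef)
    (K : Matrix (Fin m) (Fin n) ℝ) (γ : ℝ) (hγ : γ ∈ Set.Ioo (0 : ℝ) 1)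
    -- i.i.d. noise with zero mean, identity covariance, bounded a.s.
    (z : ℕ → Ω → (Fin n → ℝ)) (hzmeas : ∀ t, Measurable (z t))
    (hindep : ProbabilityTheory.iIndepFun z P)
    (hident : ∀ s t : ℕ, P.map (z s) = P.map (z t))
    (hzmean : ∀ t i, ∫ ω, z t ω i ∂P = 0)
    (hzcov : ∀ t i j, ∫ ω, z t ω i * z t ω j ∂P = if i = j then 1 else 0)
    (Cn : ℝ) (hzbdd : ∀ t, ∀ᵐ ω ∂P, ∑ i, (z t ω i) ^ 2 ≤ Cn)
    -- initial-state distribution with zero mean, identity covariance, bounded a.s.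
    (ν : Measure (Fin n → ℝ)) [IsProbabilityMeasure ν]
    (hνmean : ∀ i, ∫ s, s i ∂ν = 0)
    (hνcov : ∀ i j, ∫ s, s i * s j ∂ν = if i = j then 1 else 0)
    (hνbdd : ∀ᵐ s ∂ν, ∑ i, (s i) ^ 2 ≤ Cn)
    -- noisy trajectory: s₀ = 0, s_{t+1} = A s_t + B u_t + z_t with u_t = -K s_t
    (sdyn : ℕ → Ω → (Fin n → ℝ))
    (hsdyn0 : ∀ ω, sdyn 0 ω = 0)
    (hsdyn : ∀ t ω, sdyn (t + 1) ω =
      A.mulVec (sdyn t ω) + B.mulVec (-(K.mulVec (sdyn t ω))) + z t ω)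
    -- noiseless trajectory from a random initial state
    (sinit : ℕ → (Fin n → ℝ) → (Fin n → ℝ))
    (hsinit0 : ∀ s₀, sinit 0 s₀ = s₀)
    (hsinit : ∀ t s₀, sinit (t + 1) s₀ =
      A.mulVec (sinit t s₀) + B.mulVec (-(K.mulVec (sinit t s₀))))
    -- K stabilizes the discounted system: powers of √γ(A − BK) decay geometrically
    (hstab : ∃ C : ℝ, ∃ c : ℝ, 0 ≤ c ∧ c < 1 ∧ ∀ k : ℕ, ∀ i j,
      |((Real.sqrt γ • (A - B * K)) ^ k) i j| ≤ C * c ^ k)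
    (Cdyn Cinit : ℝ)
    (hCdyn : HasSum (fun t : ℕ => γ ^ t * ∫ ω,
      (sdyn t ω ⬝ᵥ Q.mulVec (sdyn t ω) +
        (-(K.mulVec (sdyn t ω))) ⬝ᵥ R.mulVec (-(K.mulVec (sdyn t ω)))) ∂P) Cdyn)
    (hCinit : HasSum (fun t : ℕ => γ ^ t * ∫ s₀,
      (sinit t s₀ ⬝ᵥ Q.mulVec (sinit t s₀) +
        (-(K.mulVec (sinit t s₀))) ⬝ᵥ R.mulVec (-(K.mulVec (sinit t s₀)))) ∂ν) Cinit) :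
    Cdyn = (γ / (1 - γ)) * Cinit := by
  obtain ⟨hγ0, hγ1⟩ := hγ
  set M : Matrix (Fin n) (Fin n) ℝ := A - B * K with hMdef
  set W : Matrix (Fin n) (Fin n) ℝ := Q + Kᵀ * R * K with hWdef
  -- cost rewrite
  have hcost : ∀ s : Fin n → ℝ,
      s ⬝ᵥ Q.mulVec s + (-(K.mulVec s)) ⬝ᵥ R.mulVec (-(K.mulVec s)) = s ⬝ᵥ W *ᵥ s := by
    intro s
    have h1 : (-(K *ᵥ s)) ⬝ᵥ R *ᵥ (-(K *ᵥ s)) = s ⬝ᵥ (Kᵀ * R * K) *ᵥ s := by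
      rw [Matrix.mulVec_neg, neg_dotProduct, dotProduct_neg, neg_neg,
        lqr_aux_conj_dot]
    show s ⬝ᵥ Q *ᵥ s + (-(K *ᵥ s)) ⬝ᵥ R *ᵥ (-(K *ᵥ s)) = _
    rw [h1, hWdef, Matrix.add_mulVec, dotProduct_add]
  -- one-step dynamics in terms of M
  have hstep : ∀ s : Fin n → ℝ,
      A.mulVec s + B.mulVec (-(K.mulVec s)) = M *ᵥ s := by
    intro s
    rw [hMdef, Matrix.sub_mulVec, Matrix.mulVec_neg, Matrix.mulVec_mulVec]
    abel
  -- closed forms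
  have hsinit' : ∀ t s₀, sinit t s₀ = (M ^ t) *ᵥ s₀ := by
    intro t
    induction t with
    | zero => intro s₀; simp [hsinit0]
    | succ t ih =>
      intro s₀
      rw [hsinit, ih, hstep, Matrix.mulVec_mulVec, ← pow_succ']
  have hsdyn' : ∀ t ω, sdyn t ω = ∑ j ∈ Finset.range t, (M ^ (t - 1 - j)) *ᵥ z j ω := by
    intro t
    induction t with
    | zero => intro ω; simp [hsdyn0]
    | succ t ih =>
      intro ω
      rw [hsdyn, ih, hstep, Finset.sum_range_succ]
      rw [lqr_aux_mulVec_sum]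
      congr 1
      · refine Finset.sum_congr rfl fun j hj => ?_
        rw [Matrix.mulVec_mulVec, ← pow_succ']
        have hj' := Finset.mem_range.mp hj
        have he : t - 1 - j + 1 = t + 1 - 1 - j := by omega
        rw [he]
      · have : t + 1 - 1 - t = 0 := by omega
        rw [this, pow_zero, Matrix.one_mulVec]
  -- Cn nonneg
  have hCn0 : (0:ℝ) ≤ Cn := by
    by_contra h
    push_neg at h
    have h2 : ∀ᵐ ω ∂P, False := by
      filter_upwards [hzbdd 0] with ω hω
      have : (0:ℝ) ≤ ∑ i, (z 0 ω i) ^ 2 := Finset.sum_nonneg fun i _ => sq_nonneg _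
      linarith
    obtain ⟨_, hf⟩ := h2.exists
    exact hf
  -- integrability of coordinate products
  have hzint : ∀ j k a b, Integrable (fun ω => z j ω a * z k ω b) P :=
    fun j k a b => lqr_aux_int_prod P (z j) (z k) (hzmeas j) (hzmeas k) Cn (hzbdd j) (hzbdd k) a b
  -- cross moments vanish
  have hzz0 : ∀ j k, j ≠ k → ∀ a b, ∫ ω, z j ω a * z k ω b ∂P = 0 := by
    intro j k hjk a b
    have hind := (hindep.indepFun hjk).comp (measurable_pi_apply a) (measurable_pi_apply b)
    have heq : (fun ω => z j ω a * z k ω b)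
        = ((fun v : Fin n → ℝ => v a) ∘ z j) * ((fun v : Fin n → ℝ => v b) ∘ z k) := rfl
    rw [heq, hind.integral_mul_eq_mul_integral
      (((measurable_pi_apply a).comp (hzmeas j)).aestronglyMeasurable)
      (((measurable_pi_apply b).comp (hzmeas k)).aestronglyMeasurable)]
    have h1 : ∫ ω, ((fun v : Fin n → ℝ => v a) ∘ z j) ω ∂P = 0 := hzmean j a
    have h2 : ∫ ω, ((fun v : Fin n → ℝ => v b) ∘ z k) ω ∂P = 0 := hzmean k b
    rw [h1, h2, mul_zero]
  -- quadratic moments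
  have hmomz : ∀ (G : Matrix (Fin n) (Fin n) ℝ) (j k : ℕ),
      ∫ ω, (z j ω) ⬝ᵥ G *ᵥ (z k ω) ∂P = if j = k then G.trace else 0 := by
    intro G j k
    by_cases hjk : j = k
    · subst hjk
      rw [if_pos rfl]
      exact lqr_aux_moment P (z j) (z j) (fun a b => hzint j j a b) (hzcov j) G
    · rw [if_neg hjk]
      exact lqr_aux_moment_zero P (z j) (z k) (fun a b => hzint j k a b) (hzz0 j k hjk) G
  -- integrability of quadratic forms in z
  have hzintG : ∀ (G : Matrix (Fin n) (Fin n) ℝ) (j k : ℕ),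
      Integrable (fun ω => (z j ω) ⬝ᵥ G *ᵥ (z k ω)) P := by
    intro G j k
    have h1 : (fun ω => (z j ω) ⬝ᵥ G *ᵥ (z k ω))
        = fun ω => ∑ a, ∑ b, G a b * (z j ω a * z k ω b) := by
      funext ω; exact lqr_aux_quad_expand G (z j ω) (z k ω)
    rw [h1]
    exact integrable_finset_sum _ fun a _ =>
      integrable_finset_sum _ fun b _ => (hzint j k a b).const_mul _
  -- ν moments
  have hνint : ∀ a b, Integrable (fun s => s a * s b) ν :=
    fun a b => lqr_aux_int_prod ν id id measurable_id measurable_id Cn hνbdd hνbdd a b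
  have hmomν : ∀ G : Matrix (Fin n) (Fin n) ℝ, ∫ s, s ⬝ᵥ G *ᵥ s ∂ν = G.trace :=
    fun G => lqr_aux_moment ν id id (fun a b => hνint a b) hνcov G
  -- define f
  set f : ℕ → ℝ := fun j => ((M ^ j)ᵀ * W * (M ^ j)).trace with hfdef
  -- identify the init costs
  have hbt : ∀ t : ℕ, (∫ s₀,
      (sinit t s₀ ⬝ᵥ Q.mulVec (sinit t s₀) +
        (-(K.mulVec (sinit t s₀))) ⬝ᵥ R.mulVec (-(K.mulVec (sinit t s₀)))) ∂ν) = f t := by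
    intro t
    have h1 : (fun s₀ => (sinit t s₀ ⬝ᵥ Q.mulVec (sinit t s₀) +
        (-(K.mulVec (sinit t s₀))) ⬝ᵥ R.mulVec (-(K.mulVec (sinit t s₀)))))
        = fun s₀ => s₀ ⬝ᵥ ((M ^ t)ᵀ * W * (M ^ t)) *ᵥ s₀ := by
      funext s₀
      rw [hcost, hsinit', lqr_aux_conj_dot]
    rw [h1, hmomν]
  -- identify the dyn costs
  have hat : ∀ t : ℕ, (∫ ω,
      (sdyn t ω ⬝ᵥ Q.mulVec (sdyn t ω) +
        (-(K.mulVec (sdyn t ω))) ⬝ᵥ R.mulVec (-(K.mulVec (sdyn t ω)))) ∂P)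
      = ∑ j ∈ Finset.range t, f j := by
    intro t
    have h1 : (fun ω => (sdyn t ω ⬝ᵥ Q.mulVec (sdyn t ω) +
        (-(K.mulVec (sdyn t ω))) ⬝ᵥ R.mulVec (-(K.mulVec (sdyn t ω)))))
        = fun ω => ∑ j ∈ Finset.range t, ∑ k ∈ Finset.range t,
            (z j ω) ⬝ᵥ ((M ^ (t - 1 - j))ᵀ * W * (M ^ (t - 1 - k))) *ᵥ (z k ω) := by
      funext ω
      rw [hcost, hsdyn' t ω, lqr_aux_sum_dotProduct]
      refine Finset.sum_congr rfl fun j _ => ?_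
      rw [lqr_aux_mulVec_sum, lqr_aux_dotProduct_sum]
      refine Finset.sum_congr rfl fun k _ => ?_
      exact lqr_aux_conj_dot _ _ _ _ _
    rw [h1, integral_finset_sum _ (fun j _ => integrable_finset_sum _ (fun k _ => hzintG _ j k))]
    have h2 : ∀ j ∈ Finset.range t, (∫ ω, ∑ k ∈ Finset.range t,
        (z j ω) ⬝ᵥ ((M ^ (t - 1 - j))ᵀ * W * (M ^ (t - 1 - k))) *ᵥ (z k ω) ∂P)
        = f (t - 1 - j) := by
      intro j hj
      rw [integral_finset_sum _ (fun k _ => hzintG _ j k)]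
      have h3 : ∀ k ∈ Finset.range t, (∫ ω,
          (z j ω) ⬝ᵥ ((M ^ (t - 1 - j))ᵀ * W * (M ^ (t - 1 - k))) *ᵥ (z k ω) ∂P)
          = if j = k then f (t - 1 - j) else 0 := by
        intro k _
        rw [hmomz]
        by_cases hjk : j = k
        · subst hjk; simp [hfdef]
        · simp [hjk]
      rw [Finset.sum_congr rfl h3, Finset.sum_ite_eq, if_pos hj]
    rw [Finset.sum_congr rfl h2, Finset.sum_range_reflect]
  -- nonnegativity of f
  have hfnn : ∀ j, 0 ≤ f j := by
    intro j
    have h1 : f j = ∫ s, s ⬝ᵥ ((M ^ j)ᵀ * W * (M ^ j)) *ᵥ s ∂ν := (hmomν _).symm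
    rw [h1]
    refine integral_nonneg fun s => ?_
    have e1 : s ⬝ᵥ ((M ^ j)ᵀ * W * (M ^ j)) *ᵥ s
        = ((M ^ j) *ᵥ s) ⬝ᵥ W *ᵥ ((M ^ j) *ᵥ s) :=
      (lqr_aux_conj_dot (M ^ j) (M ^ j) W s s).symm
    have e2 := hcost ((M ^ j) *ᵥ s)
    have hq : 0 ≤ ((M ^ j) *ᵥ s) ⬝ᵥ Q *ᵥ ((M ^ j) *ᵥ s) := by
      simpa using hQ.posSemidef.dotProduct_mulVec_nonneg ((M ^ j) *ᵥ s)
    have hr : 0 ≤ (-(K *ᵥ ((M ^ j) *ᵥ s))) ⬝ᵥ R *ᵥ (-(K *ᵥ ((M ^ j) *ᵥ s))) := by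
      simpa using hR.posSemidef.dotProduct_mulVec_nonneg (-(K *ᵥ ((M ^ j) *ᵥ s)))
    rw [e1, ← e2]
    simp only [Pi.zero_apply]
    linarith
  -- rewritten sums
  have hCdyn' : HasSum (fun t : ℕ => γ ^ t * ∑ j ∈ Finset.range t, f j) Cdyn := by
    have := hCdyn
    simp only [hat] at this
    exact this
  have hCinit' : HasSum (fun t : ℕ => γ ^ t * f t) Cinit := by
    have := hCinit
    simp only [hbt] at this
    exact this
  -- the double-sum family
  set g : ℕ × ℕ → ℝ := fun p => if p.2 < p.1 then γ ^ p.1 * f p.2 else 0 with hgdef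
  have hg0 : ∀ p, 0 ≤ g p := by
    intro p
    rw [hgdef]
    dsimp only
    split
    · exact mul_nonneg (pow_nonneg hγ0.le _) (hfnn _)
    · exact le_refl 0
  have hrow0 : ∀ t : ℕ, ∀ j ∉ Finset.range t, g (t, j) = 0 := by
    intro t j hj
    rw [hgdef]
    simp only [Finset.mem_range, not_lt] at hj
    exact if_neg (by omega)
  have hrowsum : ∀ t : ℕ, ∑' j, g (t, j) = γ ^ t * ∑ j ∈ Finset.range t, f j := by
    intro t
    rw [tsum_eq_sum (hrow0 t), Finset.mul_sum]
    refine Finset.sum_congr rfl fun j hj => ?_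
    rw [hgdef]
    exact if_pos (Finset.mem_range.mp hj)
  have hrowSummable : ∀ t : ℕ, Summable fun j => g (t, j) :=
    fun t => summable_of_ne_finset_zero (hrow0 t)
  have hgSummable : Summable g := by
    refine (summable_prod_of_nonneg hg0).mpr ⟨hrowSummable, ?_⟩
    have : (fun t => ∑' j, g (t, j)) = fun t => γ ^ t * ∑ j ∈ Finset.range t, f j :=
      funext hrowsum
    rw [this]
    exact hCdyn'.summable
  -- column sums
  have hcolHasSum : ∀ j : ℕ, HasSum (fun t => g (t, j)) (γ ^ (j + 1) * (1 - γ)⁻¹ * f j) := by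
    intro j
    have hinj : Function.Injective (fun s : ℕ => s + (j + 1)) := fun a b h => by
      have h' : a + (j + 1) = b + (j + 1) := h
      omega
    have hsupp : ∀ t ∉ Set.range (fun s : ℕ => s + (j + 1)), g (t, j) = 0 := by
      intro t ht
      have : t < j + 1 := by
        by_contra h
        push_neg at h
        refine ht ⟨t - (j + 1), ?_⟩
        show t - (j + 1) + (j + 1) = t
        omega
      rw [hgdef]
      exact if_neg (by omega)
    have hgeo : HasSum (fun s : ℕ => g (s + (j + 1), j)) (γ ^ (j + 1) * (1 - γ)⁻¹ * f j) := by
      have h0 : HasSum (fun s : ℕ => γ ^ (j + 1) * γ ^ s * f j)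
          (γ ^ (j + 1) * (1 - γ)⁻¹ * f j) := by
        have := ((hasSum_geometric_of_lt_one hγ0.le hγ1).mul_left (γ ^ (j + 1))).mul_right (f j)
        simpa [mul_assoc] using this
      have heq : (fun s : ℕ => g (s + (j + 1), j))
          = fun s : ℕ => γ ^ (j + 1) * γ ^ s * f j := by
        funext s
        rw [hgdef]
        dsimp only
        rw [if_pos (by omega), pow_add]
        ring
      rw [heq]
      exact h0
    exact (hinj.hasSum_iff hsupp).mp hgeo
  have hcolsum : (fun j : ℕ => ∑' t, g (t, j)) = fun j => γ ^ (j + 1) * (1 - γ)⁻¹ * f j :=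
    funext fun j => (hcolHasSum j).tsum_eq
  have hswap : ∑' (j : ℕ), ∑' (t : ℕ), g (t, j) = ∑' (t : ℕ), ∑' (j : ℕ), g (t, j) :=
    hgSummable.tsum_comm' hrowSummable (fun j => (hcolHasSum j).summable)
  have hfinal : HasSum (fun j : ℕ => γ ^ (j + 1) * (1 - γ)⁻¹ * f j) (γ / (1 - γ) * Cinit) := by
    have h1 := hCinit'.mul_left (γ * (1 - γ)⁻¹)
    have heq : (fun j : ℕ => γ * (1 - γ)⁻¹ * (γ ^ j * f j))
        = fun j => γ ^ (j + 1) * (1 - γ)⁻¹ * f j := by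
      funext j
      rw [pow_succ]
      ring
    rw [div_eq_mul_inv]
    rw [heq] at h1
    exact h1
  calc Cdyn = ∑' t : ℕ, γ ^ t * ∑ j ∈ Finset.range t, f j := hCdyn'.tsum_eq.symm
    _ = ∑' (t : ℕ), ∑' (j : ℕ), g (t, j) := tsum_congr fun t => (hrowsum t).symm
    _ = ∑' (j : ℕ), ∑' (t : ℕ), g (t, j) := hswap.symm
    _ = ∑' j : ℕ, γ ^ (j + 1) * (1 - γ)⁻¹ * f j := by rw [hcolsum]
    _ = γ / (1 - γ) * Cinit := hfinal.tsum_eq
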